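/- There exists a kissing configuration of size 240 in dimension 8 with common norm 2√2: a set of 240 points in EuclideanSpace ℝ (Fin 8), each of Euclidean norm √8, such that any two distinct points are at Euclidean distance at least √8. It can be realized by taking the 128 vectors of shape ±1^8 whose sign patterns form a binary code of length 8 and minimum distance 2 (the even-weight code), together with the 112 vectors of shape ±2² 0⁶ with all 28 two-element supports and all 4 sign patterns. -/

import Mathlib

set_option maxHeartbeats 2000000
set_option maxRecDepth 40000

open Finset

namespace Kissing8

def Z0 : Finset (Fin 8 → ℤ) :=
  ((Finset.univ : Finset (Fin 8 → Bool)).filter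
    (fun s => Even ((Finset.univ.filter fun i => s i = true).card))).image
    (fun s i => if s i then (1:ℤ) else -1)

def Z1 : Finset (Fin 8 → ℤ) :=
  ((Finset.univ : Finset (Fin 8 × Fin 8 × Bool × Bool)).filter
    (fun p => p.1 < p.2.1)).image
    (fun p k => if k = p.1 then (if p.2.2.1 then (2:ℤ) else -2)
      else if k = p.2.1 then (if p.2.2.2 then (2:ℤ) else -2) else 0)

lemma Z0_card : Z0.card = 128 := by decide
lemma Z1_card : Z1.card = 112 := by decide

lemma Z0_struct : ∀ v ∈ Z0, (∀ i, v i = 1 ∨ v i = -1) ∧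
    Even ((univ.filter fun i => v i = -1).card) := by decide

lemma Z1_struct : ∀ v ∈ Z1, ((univ.filter fun i => v i ≠ 0).card = 2) ∧
    ∀ i, v i ≠ 0 → v i = 2 ∨ v i = -2 := by decide

def ι8 (v : Fin 8 → ℤ) : EuclideanSpace ℝ (Fin 8) := WithLp.toLp 2 (fun i => (v i : ℝ))

lemma ι8_inj : Function.Injective ι8 := by
  intro v w h
  funext i
  have h' := congrFun (congrArg WithLp.ofLp h) i
  simp only [ι8, WithLp.ofLp_toLp] at h'
  exact_mod_cast h'

lemma sum_sub_sq (v w : Fin 8 → ℤ) :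
    ∑ i, (v i - w i)^2 = ∑ i, v i^2 + ∑ i, w i^2 - 2 * ∑ i, v i * w i := by
  rw [← Finset.sum_add_distrib, Finset.mul_sum, ← Finset.sum_sub_distrib]
  exact Finset.sum_congr rfl fun i _ => by ring

lemma norm0 (v : Fin 8 → ℤ) (h : ∀ i, v i = 1 ∨ v i = -1) : ∑ i, v i ^ 2 = 8 := by
  have h1 : ∀ i ∈ univ, v i ^ 2 = 1 := fun i _ => by rcases h i with h'|h' <;> rw [h'] <;> ring
  rw [Finset.sum_congr rfl h1]
  simp

lemma norm1 (v : Fin 8 → ℤ) (hc : (univ.filter fun i => v i ≠ 0).card = 2)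
    (h : ∀ i, v i ≠ 0 → v i = 2 ∨ v i = -2) : ∑ i, v i ^ 2 = 8 := by
  have h1 : ∀ i ∈ univ, v i ^ 2 = if v i ≠ 0 then 4 else 0 := by
    intro i _
    by_cases h0 : v i = 0
    · simp [h0]
    · rcases h i h0 with h'|h' <;> simp [h0, h'] <;> ring
  rw [Finset.sum_congr rfl h1, ← Finset.sum_filter, Finset.sum_const, hc]
  ring

lemma abs1 (v : Fin 8 → ℤ) (hc : (univ.filter fun i => v i ≠ 0).card = 2)
    (h : ∀ i, v i ≠ 0 → v i = 2 ∨ v i = -2) : ∑ i, |v i| = 4 := by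
  have h1 : ∀ i ∈ univ, |v i| = if v i ≠ 0 then 4/2 else 0 := by
    intro i _
    by_cases h0 : v i = 0
    · simp [h0]
    · rcases h i h0 with h'|h' <;> simp [h0, h']
  rw [Finset.sum_congr rfl h1, ← Finset.sum_filter, Finset.sum_const, hc]
  ring

lemma key (v w : Fin 8 → ℤ) (hv : ∑ i, v i^2 = 8) (hw : ∑ i, w i^2 = 8)
    (hS : ∑ i, v i * w i ≤ 4) : 8 ≤ ∑ i, (v i - w i)^2 := by
  rw [sum_sub_sq, hv, hw]; omega

lemma S_le_of_dvd (v w : Fin 8 → ℤ) (hv : ∑ i, v i^2 = 8) (hw : ∑ i, w i^2 = 8)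
    (h4 : (4:ℤ) ∣ ∑ i, v i * w i) (hne : v ≠ w) : ∑ i, v i * w i ≤ 4 := by
  by_contra h
  push_neg at h
  have h8 : 8 ≤ ∑ i, v i * w i := by omega
  have h0 : 0 ≤ ∑ i, (v i - w i)^2 := Finset.sum_nonneg fun i _ => sq_nonneg _
  have he : ∑ i, (v i - w i)^2 = 16 - 2 * ∑ i, v i * w i := by rw [sum_sub_sq, hv, hw]; ring
  have hz : ∑ i, (v i - w i)^2 = 0 := by omega
  have hall := (Finset.sum_eq_zero_iff_of_nonneg (fun i _ => sq_nonneg (v i - w i))).1 hz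
  apply hne
  funext i
  have h' := hall i (mem_univ i)
  have : v i - w i = 0 := by nlinarith [h']
  linarith

lemma dvd_AA (v w : Fin 8 → ℤ) (hv : ∀ i, v i = 1 ∨ v i = -1) (hw : ∀ i, w i = 1 ∨ w i = -1)
    (hev : Even ((univ.filter fun i => v i = -1).card))
    (hew : Even ((univ.filter fun i => w i = -1).card)) :
    (4:ℤ) ∣ ∑ i, v i * w i := by
  have hterm : ∀ i ∈ univ, v i * w i =
      1 - 2*(if v i = -1 then (1:ℤ) else 0) - 2*(if w i = -1 then (1:ℤ) else 0)
        + 4*(if v i = -1 ∧ w i = -1 then (1:ℤ) else 0) := by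
    intro i _
    rcases hv i with h1|h1 <;> rcases hw i with h2|h2 <;> simp [h1, h2] <;> norm_num
  rw [Finset.sum_congr rfl hterm]
  rw [Finset.sum_add_distrib, Finset.sum_sub_distrib, Finset.sum_sub_distrib,
    ← Finset.mul_sum, ← Finset.mul_sum, ← Finset.mul_sum, Finset.sum_boole,
    Finset.sum_boole, Finset.sum_boole]
  obtain ⟨a, ha⟩ := hev
  obtain ⟨b, hb⟩ := hew
  rw [ha, hb]
  simp only [Finset.sum_const, Finset.card_univ, Fintype.card_fin, smul_eq_mul, nsmul_eq_mul, mul_one, Nat.cast_ofNat]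
  push_cast
  omega

lemma dvd_BB (v w : Fin 8 → ℤ) (hv : ∀ i, v i ≠ 0 → v i = 2 ∨ v i = -2)
    (hw : ∀ i, w i ≠ 0 → w i = 2 ∨ w i = -2) : (4:ℤ) ∣ ∑ i, v i * w i := by
  apply Finset.dvd_sum
  intro i _
  have h2v : (2:ℤ) ∣ v i := by
    by_cases h : v i = 0
    · simp [h]
    · rcases hv i h with h'|h' <;> simp [h']
  have h2w : (2:ℤ) ∣ w i := by
    by_cases h : w i = 0
    · simp [h]
    · rcases hw i h with h'|h' <;> simp [h']
  exact mul_dvd_mul h2v h2w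

lemma S_cross (v w : Fin 8 → ℤ) (hv : ∀ i, v i = 1 ∨ v i = -1)
    (habs : ∑ i, |w i| = 4) : ∑ i, v i * w i ≤ 4 := by
  calc ∑ i, v i * w i ≤ ∑ i, |v i * w i| := Finset.sum_le_sum fun i _ => le_abs_self _
    _ = ∑ i, |w i| := Finset.sum_congr rfl fun i _ => by
        rw [abs_mul]; rcases hv i with h|h <;> simp [h]
    _ = 4 := habs

lemma norm_ι (v : Fin 8 → ℤ) (h : ∑ i, v i^2 = 8) : ‖ι8 v‖ = Real.sqrt 8 := by
  rw [EuclideanSpace.norm_eq]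
  congr 1
  have : ∑ i, ‖ι8 v i‖^2 = ((∑ i, v i^2 : ℤ) : ℝ) := by
    push_cast
    exact Finset.sum_congr rfl fun i _ => by
      simp only [ι8, WithLp.ofLp_toLp]
      rw [Real.norm_eq_abs, sq_abs]
  rw [this, h]; norm_num

lemma dist_ι (v w : Fin 8 → ℤ) (h : (8:ℤ) ≤ ∑ i, (v i - w i)^2) :
    Real.sqrt 8 ≤ dist (ι8 v) (ι8 w) := by
  rw [EuclideanSpace.dist_eq]
  apply Real.sqrt_le_sqrt
  calc (8:ℝ) ≤ ((∑ i, (v i - w i)^2 : ℤ) : ℝ) := by exact_mod_cast h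
    _ = ∑ i, dist (ι8 v i) (ι8 w i)^2 := by
        push_cast
        exact Finset.sum_congr rfl fun i _ => by
          simp only [ι8, WithLp.ofLp_toLp]
          rw [Real.dist_eq, sq_abs]

end Kissing8

open Classical
open Finset Kissing8

/-- A kissing configuration of size 240 in dimension 8 with common norm `2√2 = √8`:
240 points of norm `√8` with pairwise distances at least `√8`, realized as the 128
vectors of shape `±1⁸` whose sign patterns have an even number of minus signs (the even
weight code of length 8, minimum distance 2), together with the 112 vectors of shape
`±2² 0⁶` (all 28 two-element supports and all 4 sign patterns). -/
theorem kissing_dim8 :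
    ∃ X X₀ X₁ : Finset (EuclideanSpace ℝ (Fin 8)),
      X = X₀ ∪ X₁ ∧ Disjoint X₀ X₁ ∧
      X.card = 240 ∧ X₀.card = 128 ∧ X₁.card = 112 ∧
      (∀ x ∈ X₀, (∀ i, x i = 1 ∨ x i = -1) ∧
        Even (Finset.univ.filter fun i => x i = -1).card) ∧
      (∀ x ∈ X₁, (Finset.univ.filter fun i => x i ≠ 0).card = 2 ∧
        ∀ i, x i ≠ 0 → x i = 2 ∨ x i = -2) ∧
      (∀ x ∈ X, ‖x‖ = Real.sqrt 8) ∧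
      (∀ x ∈ X, ∀ y ∈ X, x ≠ y → Real.sqrt 8 ≤ dist x y) := by
  have hdisjZ : ∀ v ∈ Z0, v ∉ Z1 := by
    intro v hv hv1
    rcases (Z0_struct v hv).1 0 with h | h
    · rcases (Z1_struct v hv1).2 0 (by rw [h]; norm_num) with h' | h' <;> rw [h] at h' <;> omega
    · rcases (Z1_struct v hv1).2 0 (by rw [h]; norm_num) with h' | h' <;> rw [h] at h' <;> omega
  have hdisj : Disjoint (Z0.image ι8) (Z1.image ι8) := by
    rw [Finset.disjoint_left]
    rintro x hx0 hx1
    obtain ⟨v, hv, hve⟩ := Finset.mem_image.1 hx0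
    obtain ⟨w, hw, hwe⟩ := Finset.mem_image.1 hx1
    rw [← hwe] at hve
    exact hdisjZ v hv (ι8_inj hve ▸ hw)
  have hnormZ : ∀ v ∈ Z0 ∪ Z1, ∑ i, v i ^ 2 = 8 := by
    intro v hv
    rcases Finset.mem_union.1 hv with hv | hv
    · exact norm0 v (Z0_struct v hv).1
    · exact norm1 v (Z1_struct v hv).1 (Z1_struct v hv).2
  refine ⟨Z0.image ι8 ∪ Z1.image ι8, Z0.image ι8, Z1.image ι8, rfl, hdisj, ?_, ?_, ?_, ?_, ?_, ?_, ?_⟩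
  · rw [Finset.card_union_of_disjoint hdisj,
      Finset.card_image_of_injective _ ι8_inj, Finset.card_image_of_injective _ ι8_inj,
      Z0_card, Z1_card]
  · rw [Finset.card_image_of_injective _ ι8_inj, Z0_card]
  · rw [Finset.card_image_of_injective _ ι8_inj, Z1_card]
  · -- X₀ structure
    rintro x hx
    obtain ⟨v, hv, rfl⟩ := Finset.mem_image.1 hx
    obtain ⟨h1, h2⟩ := Z0_struct v hv
    constructor
    · intro i
      rcases h1 i with h | h
      · left; show ((v i : ℝ)) = 1; exact_mod_cast h
      · right; show ((v i : ℝ)) = -1; exact_mod_cast h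
    · have hset : (Finset.univ.filter fun i => ι8 v i = -1) =
          (Finset.univ.filter fun i => v i = -1) := by
        ext i
        simp only [Finset.mem_filter, Finset.mem_univ, true_and]
        constructor
        · intro h; simp only [ι8] at h; exact_mod_cast h
        · intro h; show ((v i : ℝ)) = -1; exact_mod_cast h
      rw [hset]; exact h2
  · -- X₁ structure
    rintro x hx
    obtain ⟨v, hv, rfl⟩ := Finset.mem_image.1 hx
    obtain ⟨h1, h2⟩ := Z1_struct v hv
    constructor
    · have hset : (Finset.univ.filter fun i => ι8 v i ≠ 0) =
          (Finset.univ.filter fun i => v i ≠ 0) := by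
        ext i
        simp only [Finset.mem_filter, Finset.mem_univ, true_and]
        constructor
        · intro h h0; exact h (by show ((v i : ℝ)) = 0; exact_mod_cast h0)
        · intro h h0; simp only [ι8] at h0; exact h (by exact_mod_cast h0)
      rw [hset]; exact h1
    · intro i hi
      have hi' : v i ≠ 0 := fun h0 => hi (by show ((v i : ℝ)) = 0; exact_mod_cast h0)
      rcases h2 i hi' with h | h
      · left; show ((v i : ℝ)) = 2; exact_mod_cast h
      · right; show ((v i : ℝ)) = -2; exact_mod_cast h
  · -- norms
    intro x hx
    rw [← Finset.image_union] at hx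
    obtain ⟨v, hv, rfl⟩ := Finset.mem_image.1 hx
    exact norm_ι v (hnormZ v hv)
  · -- distances
    intro x hx y hy hne
    rw [← Finset.image_union] at hx hy
    obtain ⟨v, hv, rfl⟩ := Finset.mem_image.1 hx
    obtain ⟨w, hw, rfl⟩ := Finset.mem_image.1 hy
    have hneZ : v ≠ w := fun h => hne (by rw [h])
    apply dist_ι
    apply key v w (hnormZ v hv) (hnormZ w hw)
    rcases Finset.mem_union.1 hv with hv' | hv' <;> rcases Finset.mem_union.1 hw with hw' | hw'
    · exact S_le_of_dvd v w (hnormZ v hv) (hnormZ w hw)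
        (dvd_AA v w (Z0_struct v hv').1 (Z0_struct w hw').1 (Z0_struct v hv').2 (Z0_struct w hw').2) hneZ
    · exact S_cross v w (Z0_struct v hv').1 (abs1 w (Z1_struct w hw').1 (Z1_struct w hw').2)
    · have hcomm : ∑ i, v i * w i = ∑ i, w i * v i :=
        Finset.sum_congr rfl fun i _ => mul_comm _ _
      rw [hcomm]
      exact S_cross w v (Z0_struct w hw').1 (abs1 v (Z1_struct v hv').1 (Z1_struct v hv').2)
    · exact S_le_of_dvd v w (hnormZ v hv) (hnormZ w hw)
        (dvd_BB v w (Z1_struct v hv').2 (Z1_struct w hw').2) hneZ
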